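/- Let ν be a symmetric Lévy measure on ℝⁿ and Ω ⊆ ℝⁿ a nonempty bounded open set. If u ∈ C²_b(ℝⁿ), then with f := Lu ∈ L²(Ω) one has ⟨u,φ⟩_ν = ∫_Ω f φ dx for every φ ∈ H_ν^Ω(ℝⁿ); that is, every C²_b solution of Lu = f in Ω, u = g on ℝⁿ∖Ω is a weak solution. -/

import Mathlib

open MeasureTheory Filter Set Topology
open scoped ENNReal Topology Pointwise Classical

noncomputable section

abbrev Eucl (n : ℕ) : Type := EuclideanSpace ℝ (Fin n)

/-- A symmetric Lévy measure on ℝⁿ: ν({0}) = 0, ν(−A) = ν(A) for Borel A, and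
∫ min(1,|y|²) dν < ∞. -/
def IsSymmLevy {n : ℕ} (ν : Measure (Eucl n)) : Prop :=
  ν {0} = 0 ∧ (∀ A : Set (Eucl n), MeasurableSet A → ν (-A) = ν A) ∧
    (∫⁻ y, ENNReal.ofReal (min 1 (‖y‖ ^ 2)) ∂ν) < ⊤

/-- The truncated nonlocal operator: ∫_{|y| ≥ ε} (u(x) − u(x+y)) dν(y). -/
def truncL {n : ℕ} (ν : Measure (Eucl n)) (u : Eucl n → ℝ) (x : Eucl n) (ε : ℝ) : ℝ :=
  ∫ y in {y : Eucl n | ε ≤ ‖y‖}, (u x - u (x + y)) ∂ν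

/-- `Lu(x)` is well defined with value `l`: the integrands are ν-integrable away from the
origin, and the principal value limit exists and equals `l`. -/
def HasLAt {n : ℕ} (ν : Measure (Eucl n)) (u : Eucl n → ℝ) (x : Eucl n) (l : ℝ) : Prop :=
  (∀ ε : ℝ, 0 < ε → IntegrableOn (fun y => u x - u (x + y)) {y : Eucl n | ε ≤ ‖y‖} ν) ∧
  Tendsto (truncL ν u x) (𝓝[>] (0:ℝ)) (𝓝 l)

/-- Squared norm of the generalized Sobolev space V_ν^D(ℝⁿ). -/
def sobSq {n : ℕ} (ν : Measure (Eucl n)) (D : Set (Eucl n)) (u : Eucl n → ℝ) : ℝ≥0∞ :=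
  (∫⁻ x in D, ENNReal.ofReal (u x ^ 2)) +
    (1/2) * ∫⁻ y in D, ∫⁻ z, ENNReal.ofReal ((u y - u (y + z)) ^ 2) ∂ν

/-- Membership in V_ν^D(ℝⁿ). -/
def MemV {n : ℕ} (ν : Measure (Eucl n)) (D : Set (Eucl n)) (u : Eucl n → ℝ) : Prop :=
  Measurable u ∧ sobSq ν D u < ⊤

/-- Membership in H_ν^D(ℝⁿ): members of V_ν^D vanishing a.e. outside D. -/
def MemH {n : ℕ} (ν : Measure (Eucl n)) (D : Set (Eucl n)) (u : Eucl n → ℝ) : Prop :=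
  MemV ν D u ∧ ∀ᵐ x ∂(volume : Measure (Eucl n)), x ∉ D → u x = 0

/-- The quadratic form ⟨u,u⟩_ν (with values in [0,∞]). -/
def formQ {n : ℕ} (ν : Measure (Eucl n)) (u : Eucl n → ℝ) : ℝ≥0∞ :=
  (1/2) * ∫⁻ y, ∫⁻ z, ENNReal.ofReal ((u y - u (y + z)) ^ 2) ∂ν

/-- The bilinear form ⟨u,v⟩_ν. -/
def formB {n : ℕ} (ν : Measure (Eucl n)) (u v : Eucl n → ℝ) : ℝ :=
  (1/2) * ∫ y, (∫ z, (u y - u (y + z)) * (v y - v (y + z)) ∂ν)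

/-- Weak solution of Lu = f in Ω, u = g on ℝⁿ∖Ω. -/
def IsWeakSol {n : ℕ} (ν : Measure (Eucl n)) (Ω : Set (Eucl n))
    (f g u : Eucl n → ℝ) : Prop :=
  MemV ν Ω u ∧ (∀ᵐ x ∂(volume : Measure (Eucl n)), x ∉ Ω → u x = g x) ∧
  ∀ φ : Eucl n → ℝ, MemH ν Ω φ → formB ν u φ = ∫ x in Ω, f x * φ x

end


set_option maxHeartbeats 1000000

section AuxAll
section Aux
variable {n : ℕ} {ν : Measure (Eucl n)}

lemma mpNeg (hν : IsSymmLevy ν) : MeasurePreserving (fun z : Eucl n => -z) ν ν := by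
  refine ⟨measurable_neg, ?_⟩
  ext s hs
  rw [Measure.map_apply measurable_neg hs]
  exact hν.2.1 s hs

lemma tail_meas (ε : ℝ) : MeasurableSet {y : Eucl n | ε ≤ ‖y‖} :=
  measurableSet_le measurable_const measurable_norm

lemma tail_neg (ε : ℝ) : (fun z : Eucl n => -z) ⁻¹' {y : Eucl n | ε ≤ ‖y‖} = {y : Eucl n | ε ≤ ‖y‖} := by
  ext y; simp

lemma nu_tail (hν : IsSymmLevy ν) {ε : ℝ} (hε : 0 < ε) : ν {y : Eucl n | ε ≤ ‖y‖} < ⊤ := by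
  set S := {y : Eucl n | ε ≤ ‖y‖}
  set c : ℝ≥0∞ := ENNReal.ofReal (min 1 (ε ^ 2)) with hc
  have hcpos : 0 < c := by
    rw [hc]; apply ENNReal.ofReal_pos.2; positivity
  have h1 : c * ν S ≤ ∫⁻ y in S, ENNReal.ofReal (min 1 (‖y‖ ^ 2)) ∂ν := by
    rw [← setLIntegral_const S c]
    refine setLIntegral_mono (by fun_prop) (fun y hy => ?_)
    exact ENNReal.ofReal_le_ofReal (min_le_min le_rfl (by
      have : ε ≤ ‖y‖ := hy
      nlinarith [norm_nonneg y]))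
  have h2 : c * ν S < ⊤ := lt_of_le_of_lt (h1.trans (setLIntegral_le_lintegral _ _)) hν.2.2
  by_contra h
  push_neg at h
  rw [top_le_iff.1 h, ENNReal.mul_top hcpos.ne'] at h2
  exact absurd h2 (lt_irrefl _)

lemma nu_sigmaFinite (hν : IsSymmLevy ν) : SigmaFinite ν := by
  refine ⟨⟨⟨fun k => {y : Eucl n | ((k : ℝ) + 1)⁻¹ ≤ ‖y‖} ∪ {0}, fun _ => trivial, ?_, ?_⟩⟩⟩
  · intro k
    refine lt_of_le_of_lt (measure_union_le _ _) ?_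
    rw [hν.1]
    simpa using nu_tail hν (by positivity : (0:ℝ) < ((k : ℝ) + 1)⁻¹)
  · ext y
    simp only [mem_iUnion, mem_union, mem_setOf_eq, mem_singleton_iff, mem_univ, iff_true]
    rcases eq_or_ne y 0 with h | h
    · exact ⟨0, Or.inr h⟩
    · have hy : 0 < ‖y‖ := norm_pos_iff.2 h
      obtain ⟨k, hk⟩ := exists_nat_gt ‖y‖⁻¹
      refine ⟨k, Or.inl ?_⟩
      rw [inv_le_comm₀ (by positivity) hy]
      exact le_trans hk.le (by linarith)

lemma min_le_max_mul_min {a b r : ℝ} (ha : 0 ≤ a) (hb : 0 ≤ b) :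
    min (a * r ^ 2) b ≤ max a b * min 1 (r ^ 2) := by
  rcases le_total (r ^ 2) 1 with h | h
  · rw [min_eq_right h]
    calc min (a * r ^ 2) b ≤ a * r ^ 2 := min_le_left _ _
    _ ≤ max a b * r ^ 2 := by nlinarith [le_max_left a b, sq_nonneg r]
  · calc min (a * r ^ 2) b ≤ b := min_le_right _ _
    _ ≤ max a b * min 1 (r ^ 2) := by rw [min_eq_left h, mul_one]; exact le_max_right a b

lemma levy_min_finite (hν : IsSymmLevy ν) {a b : ℝ} (ha : 0 ≤ a) (hb : 0 ≤ b) :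
    ∫⁻ z, ENNReal.ofReal (min (a * ‖z‖ ^ 2) b) ∂ν < ⊤ := by
  have h1 : ∀ z : Eucl n, ENNReal.ofReal (min (a * ‖z‖ ^ 2) b) ≤
      ENNReal.ofReal (max a b) * ENNReal.ofReal (min 1 (‖z‖ ^ 2)) := by
    intro z
    rw [← ENNReal.ofReal_mul (le_trans ha (le_max_left a b))]
    exact ENNReal.ofReal_le_ofReal (min_le_max_mul_min ha hb)
  calc ∫⁻ z, ENNReal.ofReal (min (a * ‖z‖ ^ 2) b) ∂ν
      ≤ ∫⁻ z, ENNReal.ofReal (max a b) * ENNReal.ofReal (min 1 (‖z‖ ^ 2)) ∂ν :=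
        lintegral_mono h1
    _ = ENNReal.ofReal (max a b) * ∫⁻ z, ENNReal.ofReal (min 1 (‖z‖ ^ 2)) ∂ν :=
        lintegral_const_mul' _ _ ENNReal.ofReal_ne_top
    _ < ⊤ := ENNReal.mul_lt_top ENNReal.ofReal_lt_top hν.2.2

end Aux

section Calc
variable {n : ℕ}

lemma lip_of_fderiv_bound {E F : Type*} [NormedAddCommGroup E] [NormedSpace ℝ E]
    [NormedAddCommGroup F] [NormedSpace ℝ F]
    {u : E → F} (hd : Differentiable ℝ u) {C : ℝ} (hC : ∀ x, ‖fderiv ℝ u x‖ ≤ C) :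
    ∀ x y : E, ‖u x - u y‖ ≤ C * ‖x - y‖ := fun x y =>
  Convex.norm_image_sub_le_of_norm_fderiv_le (fun x _ => hd x)
    (fun x _ => hC x) convex_univ (mem_univ y) (mem_univ x)

lemma second_diff_bound {u : Eucl n → ℝ} (hu : ContDiff ℝ 2 u) {C2 : ℝ} (hC2nn : 0 ≤ C2)
    (hC2 : ∀ x y : Eucl n, ‖fderiv ℝ u x - fderiv ℝ u y‖ ≤ C2 * ‖x - y‖) (x z : Eucl n) :
    |2 * u x - u (x + z) - u (x - z)| ≤ 2 * C2 * ‖z‖ ^ 2 := by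
  have hd : Differentiable ℝ u := hu.differentiable (by norm_num)
  set D := fderiv ℝ u with hD
  set g : ℝ → ℝ := fun t => u (x + t • z) + u (x + t • (-z)) with hg
  set g' : ℝ → ℝ := fun t => D (x + t • z) z + D (x + t • (-z)) (-z) with hg'
  have hder : ∀ t ∈ Icc (0:ℝ) 1, HasDerivWithinAt g (g' t) (Icc 0 1) t := by
    intro t _
    have hcurve : ∀ w : Eucl n, HasDerivAt (fun s : ℝ => x + s • w) w t := by
      intro w
      simpa using (((hasDerivAt_id t).smul_const w).const_add x)
    have h1 : HasDerivAt (fun s : ℝ => u (x + s • z)) (D (x + t • z) z) t :=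
      (hd (x + t • z)).hasFDerivAt.comp_hasDerivAt t (hcurve z)
    have h2 : HasDerivAt (fun s : ℝ => u (x + s • (-z))) (D (x + t • (-z)) (-z)) t :=
      (hd (x + t • (-z))).hasFDerivAt.comp_hasDerivAt t (hcurve (-z))
    exact ((h1.add h2).hasDerivWithinAt)
  have hbound : ∀ t ∈ Icc (0:ℝ) 1, ‖g' t‖ ≤ 2 * C2 * ‖z‖ ^ 2 := by
    intro t ht
    have : g' t = (D (x + t • z) - D (x + t • (-z))) z := by
      simp [hg', ContinuousLinearMap.sub_apply, map_neg, sub_eq_add_neg]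
    rw [this]
    calc ‖(D (x + t • z) - D (x + t • (-z))) z‖
        ≤ ‖D (x + t • z) - D (x + t • (-z))‖ * ‖z‖ :=
          ContinuousLinearMap.le_opNorm _ _
      _ ≤ (C2 * ‖(x + t • z) - (x + t • (-z))‖) * ‖z‖ :=
          mul_le_mul_of_nonneg_right (hC2 _ _) (norm_nonneg z)
      _ = C2 * (2 * |t|) * ‖z‖ * ‖z‖ := by
          have : (x + t • z) - (x + t • (-z)) = (2 * t) • z := by
            module
          rw [this, norm_smul]
          simp [abs_mul, mul_assoc, mul_comm, mul_left_comm]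
      _ ≤ 2 * C2 * ‖z‖ ^ 2 := by
          have ht1 : |t| ≤ 1 := by
            rw [abs_le]; exact ⟨by linarith [ht.1], ht.2⟩
          have h1 : C2 * (2 * |t|) ≤ 2 * C2 := by nlinarith [abs_nonneg t]
          have h2 : (0:ℝ) ≤ ‖z‖ * ‖z‖ := mul_nonneg (norm_nonneg z) (norm_nonneg z)
          calc C2 * (2 * |t|) * ‖z‖ * ‖z‖ = (C2 * (2 * |t|)) * (‖z‖ * ‖z‖) := by ring
          _ ≤ (2 * C2) * (‖z‖ * ‖z‖) := mul_le_mul_of_nonneg_right h1 h2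
          _ = 2 * C2 * ‖z‖ ^ 2 := by ring
  have key := Convex.norm_image_sub_le_of_norm_hasDerivWithin_le hder hbound
    (convex_Icc 0 1) (left_mem_Icc.2 zero_le_one) (right_mem_Icc.2 zero_le_one)
  have hg1 : g 1 = u (x + z) + u (x - z) := by simp [hg, sub_eq_add_neg]
  have hg0 : g 0 = 2 * u x := by simp [hg]; ring
  rw [hg1, hg0] at key
  have : |2 * u x - u (x + z) - u (x - z)| = ‖(u (x + z) + u (x - z)) - 2 * u x‖ := by
    rw [Real.norm_eq_abs, abs_sub_comm]; ring_nf
  rw [this]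
  simpa using key

lemma fderiv_lip {u : Eucl n → ℝ} (hu : ContDiff ℝ 2 u) {C2 : ℝ}
    (hC2 : ∀ x, ‖iteratedFDeriv ℝ 2 u x‖ ≤ C2) :
    ∀ x y : Eucl n, ‖fderiv ℝ u x - fderiv ℝ u y‖ ≤ C2 * ‖x - y‖ := by
  have h1 : ContDiff ℝ 1 (fderiv ℝ u) := hu.fderiv_right (m := 1) (by norm_num)
  apply lip_of_fderiv_bound (h1.differentiable (by norm_num))
  intro x
  calc ‖fderiv ℝ (fderiv ℝ u) x‖ = ‖iteratedFDeriv ℝ 1 (fderiv ℝ u) x‖ := by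
        rw [← norm_iteratedFDeriv_zero (𝕜 := ℝ) (f := fderiv ℝ (fderiv ℝ u)) (x := x)]
        exact norm_iteratedFDeriv_fderiv (𝕜 := ℝ) (f := fderiv ℝ u) (n := 0)
    _ = ‖iteratedFDeriv ℝ 2 u x‖ := norm_iteratedFDeriv_fderiv (𝕜 := ℝ)
    _ ≤ C2 := hC2 x

lemma fderiv_bound_of_iterated {u : Eucl n → ℝ} {C1 : ℝ}
    (hC1 : ∀ x, ‖iteratedFDeriv ℝ 1 u x‖ ≤ C1) : ∀ x : Eucl n, ‖fderiv ℝ u x‖ ≤ C1 := by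
  intro x
  calc ‖fderiv ℝ u x‖ = ‖iteratedFDeriv ℝ 1 u x‖ := by
        rw [← norm_iteratedFDeriv_zero (𝕜 := ℝ) (f := fderiv ℝ u) (x := x)]
        exact norm_iteratedFDeriv_fderiv (𝕜 := ℝ) (f := u) (n := 0)
    _ ≤ C1 := hC1 x

end Calc

section Infra
variable {n : ℕ} {ν : Measure (Eucl n)}

noncomputable def tauEquiv (n : ℕ) : (Eucl n × Eucl n) ≃ᵐ (Eucl n × Eucl n) :=
  { toFun := fun p => (p.1 + p.2, p.2)
    invFun := fun q => (q.1 - q.2, q.2)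
    left_inv := fun p => by simp
    right_inv := fun q => by simp
    measurable_toFun := (measurable_fst.add measurable_snd).prodMk measurable_snd
    measurable_invFun := (measurable_fst.sub measurable_snd).prodMk measurable_snd }

def negSndEquiv (n : ℕ) : (Eucl n × Eucl n) ≃ᵐ (Eucl n × Eucl n) :=
  (MeasurableEquiv.refl (Eucl n)).prodCongr (MeasurableEquiv.neg (Eucl n))

lemma mpTau [SigmaFinite ν] :
    MeasurePreserving (fun p : Eucl n × Eucl n => (p.1 + p.2, p.2))
      ((volume : Measure (Eucl n)).prod ν) ((volume : Measure (Eucl n)).prod ν) :=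
  measurePreserving_add_prod volume ν

lemma mpNegSnd [SigmaFinite ν] (hν : IsSymmLevy ν) :
    MeasurePreserving (fun p : Eucl n × Eucl n => (p.1, -p.2))
      ((volume : Measure (Eucl n)).prod ν) ((volume : Measure (Eucl n)).prod ν) :=
  (MeasurePreserving.id volume).prod (mpNeg hν)

lemma ae_fst_null [SigmaFinite ν] {S : Set (Eucl n)} (hS : volume S = 0) :
    ((volume : Measure (Eucl n)).prod ν) {p : Eucl n × Eucl n | p.1 ∈ S} = 0 := by
  refine measure_mono_null (fun p hp => ?_)
    (show ((volume : Measure (Eucl n)).prod ν) (toMeasurable volume S ×ˢ univ) = 0 by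
      rw [Measure.prod_prod, measure_toMeasurable, hS, zero_mul])
  exact ⟨subset_toMeasurable _ _ hp, trivial⟩

lemma ae_addSnd_null [SigmaFinite ν] {S : Set (Eucl n)} (hS : volume S = 0) :
    ((volume : Measure (Eucl n)).prod ν) {p : Eucl n × Eucl n | p.1 + p.2 ∈ S} = 0 := by
  set T := toMeasurable volume S ×ˢ (univ : Set (Eucl n)) with hT
  have hTm : MeasurableSet T := (measurableSet_toMeasurable _ _).prod MeasurableSet.univ
  have hT0 : ((volume : Measure (Eucl n)).prod ν) T = 0 := by
    rw [hT, Measure.prod_prod, measure_toMeasurable, hS, zero_mul]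
  have hpre : ((volume : Measure (Eucl n)).prod ν)
      ((fun p : Eucl n × Eucl n => (p.1 + p.2, p.2)) ⁻¹' T) = 0 := by
    have h1 := (mpTau (ν := ν)).map_eq
    rw [← h1, Measure.map_apply (mpTau (ν := ν)).measurable hTm] at hT0
    exact hT0
  refine measure_mono_null (fun p hp => ?_) hpre
  exact ⟨subset_toMeasurable _ _ hp, trivial⟩
end Infra
section Trunc
variable {n : ℕ} {ν : Measure (Eucl n)} {u : Eucl n → ℝ} {C0 C2 : ℝ}

lemma tail_finite_restrict (hν : IsSymmLevy ν) {ε : ℝ} (hε : 0 < ε) :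
    IsFiniteMeasure (ν.restrict {y : Eucl n | ε ≤ ‖y‖}) := by
  constructor
  rw [Measure.restrict_apply_univ]
  exact nu_tail hν hε

lemma integrableOn_tail_bounded (hν : IsSymmLevy ν) {g : Eucl n → ℝ} (hg : Continuous g)
    {C : ℝ} (hgb : ∀ y, |g y| ≤ C) {ε : ℝ} (hε : 0 < ε) :
    IntegrableOn g {y : Eucl n | ε ≤ ‖y‖} ν := by
  haveI := tail_finite_restrict hν hε
  exact ⟨hg.stronglyMeasurable.aestronglyMeasurable,
    HasFiniteIntegral.of_bounded (C := C) (ae_of_all _ fun y => hgb y)⟩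

lemma abs_two_bound {x y : Eucl n} (hC0 : ∀ x, |u x| ≤ C0) : |u x - u y| ≤ 2 * |C0| := by
  have h1 := hC0 x; have h2 := hC0 y; have := le_abs_self C0
  calc |u x - u y| ≤ |u x| + |u y| := abs_sub _ _
  _ ≤ 2 * |C0| := by linarith

lemma abs_four_bound {x z : Eucl n} (hC0 : ∀ x, |u x| ≤ C0) :
    |2 * u x - u (x + z) - u (x - z)| ≤ 4 * |C0| := by
  have h1 := hC0 x; have h2 := hC0 (x + z); have h3 := hC0 (x - z); have := le_abs_self C0
  have e1 : |2 * u x - u (x + z) - u (x - z)| ≤ |2 * u x| + |u (x + z)| + |u (x - z)| := by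
    calc |2 * u x - u (x + z) - u (x - z)| ≤ |2 * u x - u (x + z)| + |u (x - z)| := abs_sub _ _
    _ ≤ |2 * u x| + |u (x + z)| + |u (x - z)| := by linarith [abs_sub (2 * u x) (u (x + z))]
  have e2 : |2 * u x| = 2 * |u x| := by rw [abs_mul]; norm_num
  linarith

lemma integrableOn_tail' (hν : IsSymmLevy ν) (hcont : Continuous u)
    (hC0 : ∀ x, |u x| ≤ C0) (x : Eucl n) {ε : ℝ} (hε : 0 < ε) :
    IntegrableOn (fun y => u x - u (x + y)) {y : Eucl n | ε ≤ ‖y‖} ν := by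
  refine integrableOn_tail_bounded hν (g := fun y => u x - u (x + y)) ?_
    (fun y => abs_two_bound hC0) hε
  fun_prop

lemma truncL_symmetrize (hν : IsSymmLevy ν) (hcont : Continuous u)
    (hC0 : ∀ x, |u x| ≤ C0) (x : Eucl n) {ε : ℝ} (hε : 0 < ε) :
    truncL ν u x ε =
      (1/2) * ∫ y in {y : Eucl n | ε ≤ ‖y‖}, (2 * u x - u (x + y) - u (x - y)) ∂ν := by
  set S := {y : Eucl n | ε ≤ ‖y‖} with hS
  have hmp : MeasurePreserving (fun z : Eucl n => -z) (ν.restrict S) (ν.restrict S) := by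
    have := (mpNeg hν).restrict_preimage (tail_meas ε)
    rwa [tail_neg ε] at this
  have hneg : ∫ y in S, (u x - u (x + y)) ∂ν = ∫ y in S, (u x - u (x - y)) ∂ν := by
    have := hmp.integral_comp (MeasurableEquiv.neg (Eucl n)).measurableEmbedding
      (fun y => u x - u (x - y))
    have e : ∀ y : Eucl n, u x - u (x - (-y)) = u x - u (x + y) := by
      intro y; rw [sub_neg_eq_add]
    rw [← this]
    exact integral_congr_ae (ae_of_all _ fun y => (e y).symm)
  have hint1 : IntegrableOn (fun y => u x - u (x + y)) S ν := integrableOn_tail' hν hcont hC0 x hε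
  have hint2 : IntegrableOn (fun y => u x - u (x - y)) S ν := by
    refine integrableOn_tail_bounded hν (g := fun y => u x - u (x - y)) ?_
      (fun y => abs_two_bound hC0) hε
    fun_prop
  have hsum : ∫ y in S, ((u x - u (x + y)) + (u x - u (x - y))) ∂ν
      = ∫ y in S, (u x - u (x + y)) ∂ν + ∫ y in S, (u x - u (x - y)) ∂ν :=
    integral_add hint1 hint2
  have : truncL ν u x ε + truncL ν u x ε
      = ∫ y in S, (2 * u x - u (x + y) - u (x - y)) ∂ν := by
    calc truncL ν u x ε + truncL ν u x ε
        = ∫ y in S, (u x - u (x + y)) ∂ν + ∫ y in S, (u x - u (x - y)) ∂ν := by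
          rw [truncL, ← hS, hneg]
      _ = ∫ y in S, ((u x - u (x + y)) + (u x - u (x - y))) ∂ν := hsum.symm
      _ = ∫ y in S, (2 * u x - u (x + y) - u (x - y)) ∂ν := by
          congr 1; funext y; ring
  linarith [this]

lemma truncL_bound (hν : IsSymmLevy ν) (hcont : Continuous u)
    (hC0 : ∀ x, |u x| ≤ C0) (hC2 : 0 ≤ C2)
    (hsec : ∀ x z : Eucl n, |2 * u x - u (x + z) - u (x - z)| ≤ 2 * C2 * ‖z‖ ^ 2)
    (x : Eucl n) {ε : ℝ} (hε : 0 < ε) :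
    |truncL ν u x ε| ≤
      (∫⁻ z, ENNReal.ofReal (min (2 * C2 * ‖z‖ ^ 2) (4 * |C0|)) ∂ν).toReal := by
  set Mν := ∫⁻ z, ENNReal.ofReal (min (2 * C2 * ‖z‖ ^ 2) (4 * |C0|)) ∂ν with hMν
  have hMfin : Mν ≠ ⊤ :=
    (levy_min_finite hν (by positivity) (by positivity)).ne
  rw [truncL_symmetrize hν hcont hC0 x hε]
  set S := {y : Eucl n | ε ≤ ‖y‖} with hS
  have key : |∫ y in S, (2 * u x - u (x + y) - u (x - y)) ∂ν| ≤ Mν.toReal := by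
    have h1 : |∫ y in S, (2 * u x - u (x + y) - u (x - y)) ∂ν| ≤
        (∫⁻ y in S, ENNReal.ofReal ‖2 * u x - u (x + y) - u (x - y)‖ ∂ν).toReal := by
      rw [← Real.norm_eq_abs]
      exact norm_integral_le_lintegral_norm _
    have h2 : (∫⁻ y in S, ENNReal.ofReal ‖2 * u x - u (x + y) - u (x - y)‖ ∂ν) ≤ Mν := by
      refine le_trans (lintegral_mono fun y => ?_) (setLIntegral_le_lintegral _ _)
      refine ENNReal.ofReal_le_ofReal ?_
      rw [Real.norm_eq_abs]
      exact le_min (hsec x y) (abs_four_bound hC0)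
    exact h1.trans (ENNReal.toReal_mono hMfin h2)
  have habs : |(1/2 : ℝ) * ∫ y in S, (2 * u x - u (x + y) - u (x - y)) ∂ν| =
      (1/2 : ℝ) * |∫ y in S, (2 * u x - u (x + y) - u (x - y)) ∂ν| := by
    rw [abs_mul]; norm_num
  rw [habs]
  have h0 : (0:ℝ) ≤ |∫ y in S, (2 * u x - u (x + y) - u (x - y)) ∂ν| := abs_nonneg _
  linarith

lemma truncL_measurable (hν : IsSymmLevy ν) (hcont : Continuous u) {ε : ℝ} (hε : 0 < ε) :
    StronglyMeasurable (fun x => truncL ν u x ε) := by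
  haveI := tail_finite_restrict hν hε
  have h : Continuous (fun p : Eucl n × Eucl n => u p.1 - u (p.1 + p.2)) := by
    exact (hcont.comp continuous_fst).sub (hcont.comp (continuous_fst.add continuous_snd))
  exact h.stronglyMeasurable.integral_prod_right'

end Trunc

section Part2
variable {n : ℕ} {ν : Measure (Eucl n)} {Ω : Set (Eucl n)} {u φ : Eucl n → ℝ}

lemma lint_fst_ind [SigmaFinite ν] (hΩm : MeasurableSet Ω) {F : Eucl n × Eucl n → ℝ≥0∞}
    (hF : Measurable F) :
    ∫⁻ p : Eucl n × Eucl n, Ω.indicator (fun _ => (1:ℝ≥0∞)) p.1 * F p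
        ∂((volume : Measure (Eucl n)).prod ν)
      = ∫⁻ y in Ω, ∫⁻ z, F (y, z) ∂ν := by
  have hm : Measurable (fun p : Eucl n × Eucl n => Ω.indicator (fun _ => (1:ℝ≥0∞)) p.1 * F p) := by
    exact ((measurable_const.indicator hΩm).comp measurable_fst).mul hF
  rw [lintegral_prod _ hm.aemeasurable]
  have h1 : ∀ y : Eucl n, ∫⁻ z, Ω.indicator (fun _ => (1:ℝ≥0∞)) y * F (y, z) ∂ν
      = Ω.indicator (fun _ => (1:ℝ≥0∞)) y * ∫⁻ z, F (y, z) ∂ν := fun y =>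
    lintegral_const_mul' _ _ (by
      by_cases h : y ∈ Ω <;> simp [Set.indicator_apply, h])
  simp_rw [h1]
  have h2 : ∀ y : Eucl n, Ω.indicator (fun _ => (1:ℝ≥0∞)) y * ∫⁻ z, F (y, z) ∂ν
      = Ω.indicator (fun y => ∫⁻ z, F (y, z) ∂ν) y := fun y => by
    by_cases h : y ∈ Ω <;> simp [Set.indicator_apply, h]
  simp_rw [h2]
  rw [← lintegral_indicator hΩm]

lemma lint_shift [SigmaFinite ν] (hν : IsSymmLevy ν) {w : Eucl n → ℝ} (hw : Measurable w)
    (hΩm : MeasurableSet Ω) :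
    ∫⁻ p : Eucl n × Eucl n, Ω.indicator (fun _ => (1:ℝ≥0∞)) (p.1 + p.2) *
        ENNReal.ofReal ((w p.1 - w (p.1 + p.2)) ^ 2) ∂((volume : Measure (Eucl n)).prod ν)
      = ∫⁻ y in Ω, ∫⁻ z, ENNReal.ofReal ((w y - w (y + z)) ^ 2) ∂ν := by
  set G : Eucl n × Eucl n → ℝ≥0∞ := fun q =>
    Ω.indicator (fun _ => (1:ℝ≥0∞)) q.1 * ENNReal.ofReal ((w (q.1 - q.2) - w q.1) ^ 2) with hG
  have hGm : Measurable G := by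
    apply Measurable.mul
    · exact (measurable_const.indicator hΩm).comp measurable_fst
    · exact ENNReal.measurable_ofReal.comp
        (((hw.comp (measurable_fst.sub measurable_snd)).sub (hw.comp measurable_fst)).pow_const 2)
  have step1 : ∫⁻ p : Eucl n × Eucl n, G ((fun p : Eucl n × Eucl n => (p.1 + p.2, p.2)) p)
      ∂((volume : Measure (Eucl n)).prod ν) = ∫⁻ q, G q ∂((volume : Measure (Eucl n)).prod ν) :=
    (mpTau (ν := ν)).lintegral_comp hGm
  have e1 : ∀ p : Eucl n × Eucl n, G ((fun p : Eucl n × Eucl n => (p.1 + p.2, p.2)) p)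
      = Ω.indicator (fun _ => (1:ℝ≥0∞)) (p.1 + p.2) *
        ENNReal.ofReal ((w p.1 - w (p.1 + p.2)) ^ 2) := by
    intro p
    simp only [hG, add_sub_cancel_right]
  rw [← lintegral_congr e1, step1]
  have step2 : ∫⁻ q, G q ∂((volume : Measure (Eucl n)).prod ν)
      = ∫⁻ y in Ω, ∫⁻ z, ENNReal.ofReal ((w (y - z) - w y) ^ 2) ∂ν :=
    lint_fst_ind hΩm (by
      exact ENNReal.measurable_ofReal.comp
        (((hw.comp (measurable_fst.sub measurable_snd)).sub (hw.comp measurable_fst)).pow_const 2))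
  rw [step2]
  refine setLIntegral_congr_fun hΩm (fun y _ => ?_)
  have step3 : ∫⁻ z, ENNReal.ofReal ((w (y + z) - w y) ^ 2) ∂ν
      = ∫⁻ z, ENNReal.ofReal ((w (y - z) - w y) ^ 2) ∂ν := by
    have hfm : Measurable (fun z : Eucl n => ENNReal.ofReal ((w (y + z) - w y) ^ 2)) := by
      exact ENNReal.measurable_ofReal.comp
        (((hw.comp (measurable_id.const_add y)).sub measurable_const).pow_const 2)
    have := (mpNeg hν).lintegral_comp hfm
    rw [← this]
    refine lintegral_congr fun z => ?_
    rw [← sub_eq_add_neg]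
  rw [← step3]
  refine lintegral_congr fun z => ?_
  congr 1
  ring
end Part2
section Part3
variable {n : ℕ} {ν : Measure (Eucl n)} {Ω : Set (Eucl n)} {u φ : Eucl n → ℝ}

lemma H_integrable [SigmaFinite ν] (hν : IsSymmLevy ν) (hu_cont : Continuous u)
    {CA CB : ℝ}
    (hUB : ∀ y z : Eucl n, (u y - u (y + z)) ^ 2 ≤ min (CA * ‖z‖ ^ 2) CB)
    (hCfin : ∫⁻ z, ENNReal.ofReal (min (CA * ‖z‖ ^ 2) CB) ∂ν < ⊤)
    (hφm : Measurable φ) (hφ0 : ∀ᵐ x ∂(volume : Measure (Eucl n)), x ∉ Ω → φ x = 0)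
    (hΩm : MeasurableSet Ω) (hΩfin : volume Ω < ⊤)
    (hEφ : ∫⁻ y in Ω, ∫⁻ z, ENNReal.ofReal ((φ y - φ (y + z)) ^ 2) ∂ν < ⊤) :
    Integrable (fun p : Eucl n × Eucl n => (u p.1 - u (p.1 + p.2)) * (φ p.1 - φ (p.1 + p.2)))
      ((volume : Measure (Eucl n)).prod ν) := by
  have hum : Measurable u := hu_cont.measurable
  have ham : Measurable (fun p : Eucl n × Eucl n => u p.1 - u (p.1 + p.2)) :=
    (hum.comp measurable_fst).sub (hum.comp (measurable_fst.add measurable_snd))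
  have hbm : Measurable (fun p : Eucl n × Eucl n => φ p.1 - φ (p.1 + p.2)) :=
    (hφm.comp measurable_fst).sub (hφm.comp (measurable_fst.add measurable_snd))
  have hAm : Measurable (fun p : Eucl n × Eucl n => ENNReal.ofReal ((u p.1 - u (p.1 + p.2)) ^ 2)) :=
    ENNReal.measurable_ofReal.comp (ham.pow_const 2)
  have hBm : Measurable (fun p : Eucl n × Eucl n => ENNReal.ofReal ((φ p.1 - φ (p.1 + p.2)) ^ 2)) :=
    ENNReal.measurable_ofReal.comp (hbm.pow_const 2)
  have hi1m : Measurable (fun p : Eucl n × Eucl n => Ω.indicator (fun _ => (1:ℝ≥0∞)) p.1) :=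
    (measurable_const.indicator hΩm).comp measurable_fst
  have hi2m : Measurable (fun p : Eucl n × Eucl n => Ω.indicator (fun _ => (1:ℝ≥0∞)) (p.1 + p.2)) :=
    (measurable_const.indicator hΩm).comp (measurable_fst.add measurable_snd)
  refine ⟨(ham.mul hbm).aestronglyMeasurable, ?_⟩
  rw [hasFiniteIntegral_iff_norm]
  have hae : ∀ᵐ p ∂((volume : Measure (Eucl n)).prod ν),
      ENNReal.ofReal ‖(u p.1 - u (p.1 + p.2)) * (φ p.1 - φ (p.1 + p.2))‖ ≤
        (Ω.indicator (fun _ => (1:ℝ≥0∞)) p.1 + Ω.indicator (fun _ => (1:ℝ≥0∞)) (p.1 + p.2)) *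
          (ENNReal.ofReal ((u p.1 - u (p.1 + p.2)) ^ 2) +
            ENNReal.ofReal ((φ p.1 - φ (p.1 + p.2)) ^ 2)) := by
    have hN : volume {x : Eucl n | ¬(x ∉ Ω → φ x = 0)} = 0 := hφ0
    have h1 : ∀ᵐ p ∂((volume : Measure (Eucl n)).prod ν), p.1 ∉ Ω → φ p.1 = 0 := by
      rw [ae_iff]; exact ae_fst_null hN
    have h2 : ∀ᵐ p ∂((volume : Measure (Eucl n)).prod ν), p.1 + p.2 ∉ Ω → φ (p.1 + p.2) = 0 := by
      rw [ae_iff]; exact ae_addSnd_null hN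
    filter_upwards [h1, h2] with p hp1 hp2
    set a := u p.1 - u (p.1 + p.2)
    set b := φ p.1 - φ (p.1 + p.2) with hb
    by_cases hS : p.1 ∈ Ω ∨ p.1 + p.2 ∈ Ω
    · have hχ1 : (1:ℝ≥0∞) ≤
          Ω.indicator (fun _ => (1:ℝ≥0∞)) p.1 + Ω.indicator (fun _ => (1:ℝ≥0∞)) (p.1 + p.2) := by
        rcases hS with h | h
        · rw [Set.indicator_of_mem h]; exact le_self_add
        · rw [Set.indicator_of_mem h]; exact le_add_self
      calc ENNReal.ofReal ‖a * b‖ ≤ ENNReal.ofReal (a ^ 2 + b ^ 2) := by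
            refine ENNReal.ofReal_le_ofReal ?_
            rw [norm_mul, Real.norm_eq_abs, Real.norm_eq_abs]
            nlinarith [sq_nonneg (|a| - |b|), sq_abs a, sq_abs b, abs_nonneg a, abs_nonneg b]
        _ = ENNReal.ofReal (a ^ 2) + ENNReal.ofReal (b ^ 2) :=
            ENNReal.ofReal_add (sq_nonneg a) (sq_nonneg b)
        _ = 1 * (ENNReal.ofReal (a ^ 2) + ENNReal.ofReal (b ^ 2)) := (one_mul _).symm
        _ ≤ _ := mul_le_mul_left hχ1 _
    · push_neg at hS
      have hb0 : b = 0 := by rw [hb, hp1 hS.1, hp2 hS.2, sub_zero]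
      simp [hb0]
  refine lt_of_le_of_lt (lintegral_mono_ae hae) ?_
  have expand : ∀ p : Eucl n × Eucl n,
      (Ω.indicator (fun _ => (1:ℝ≥0∞)) p.1 + Ω.indicator (fun _ => (1:ℝ≥0∞)) (p.1 + p.2)) *
        (ENNReal.ofReal ((u p.1 - u (p.1 + p.2)) ^ 2) +
          ENNReal.ofReal ((φ p.1 - φ (p.1 + p.2)) ^ 2))
      = (Ω.indicator (fun _ => (1:ℝ≥0∞)) p.1 * ENNReal.ofReal ((u p.1 - u (p.1 + p.2)) ^ 2) +
          Ω.indicator (fun _ => (1:ℝ≥0∞)) p.1 * ENNReal.ofReal ((φ p.1 - φ (p.1 + p.2)) ^ 2)) +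
        (Ω.indicator (fun _ => (1:ℝ≥0∞)) (p.1 + p.2) *
            ENNReal.ofReal ((u p.1 - u (p.1 + p.2)) ^ 2) +
          Ω.indicator (fun _ => (1:ℝ≥0∞)) (p.1 + p.2) *
            ENNReal.ofReal ((φ p.1 - φ (p.1 + p.2)) ^ 2)) := by
    intro p; ring
  rw [lintegral_congr expand]
  have hfinA : ∫⁻ y in Ω, ∫⁻ z, ENNReal.ofReal ((u y - u (y + z)) ^ 2) ∂ν < ⊤ := by
    have hin : ∀ y : Eucl n, ∫⁻ z, ENNReal.ofReal ((u y - u (y + z)) ^ 2) ∂ν ≤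
        ∫⁻ z, ENNReal.ofReal (min (CA * ‖z‖ ^ 2) CB) ∂ν := fun y =>
      lintegral_mono fun z => ENNReal.ofReal_le_ofReal (hUB y z)
    calc ∫⁻ y in Ω, ∫⁻ z, ENNReal.ofReal ((u y - u (y + z)) ^ 2) ∂ν
        ≤ ∫⁻ _ in Ω, (∫⁻ z, ENNReal.ofReal (min (CA * ‖z‖ ^ 2) CB) ∂ν) ∂volume :=
          lintegral_mono fun y => hin y
      _ = (∫⁻ z, ENNReal.ofReal (min (CA * ‖z‖ ^ 2) CB) ∂ν) * volume Ω := setLIntegral_const _ _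
      _ < ⊤ := ENNReal.mul_lt_top hCfin hΩfin
  have t1 : ∫⁻ p : Eucl n × Eucl n, Ω.indicator (fun _ => (1:ℝ≥0∞)) p.1 *
      ENNReal.ofReal ((u p.1 - u (p.1 + p.2)) ^ 2) ∂((volume : Measure (Eucl n)).prod ν) < ⊤ := by
    rw [lint_fst_ind hΩm hAm]; exact hfinA
  have t2 : ∫⁻ p : Eucl n × Eucl n, Ω.indicator (fun _ => (1:ℝ≥0∞)) p.1 *
      ENNReal.ofReal ((φ p.1 - φ (p.1 + p.2)) ^ 2) ∂((volume : Measure (Eucl n)).prod ν) < ⊤ := by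
    rw [lint_fst_ind hΩm hBm]; exact hEφ
  have t3 : ∫⁻ p : Eucl n × Eucl n, Ω.indicator (fun _ => (1:ℝ≥0∞)) (p.1 + p.2) *
      ENNReal.ofReal ((u p.1 - u (p.1 + p.2)) ^ 2) ∂((volume : Measure (Eucl n)).prod ν) < ⊤ := by
    rw [lint_shift hν hum hΩm]; exact hfinA
  have t4 : ∫⁻ p : Eucl n × Eucl n, Ω.indicator (fun _ => (1:ℝ≥0∞)) (p.1 + p.2) *
      ENNReal.ofReal ((φ p.1 - φ (p.1 + p.2)) ^ 2) ∂((volume : Measure (Eucl n)).prod ν) < ⊤ := by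
    rw [lint_shift hν hφm hΩm]; exact hEφ
  rw [lintegral_add_left (by exact (hi1m.mul hAm).add (hi1m.mul hBm)),
    lintegral_add_left (by exact hi1m.mul hAm), lintegral_add_left (by exact hi2m.mul hAm)]
  exact ENNReal.add_lt_top.2 ⟨ENNReal.add_lt_top.2 ⟨t1, t2⟩, ENNReal.add_lt_top.2 ⟨t3, t4⟩⟩
end Part3
section Part4
variable {n : ℕ} {ν : Measure (Eucl n)} {u φ : Eucl n → ℝ}

lemma T1_integrable [SigmaFinite ν] (hν : IsSymmLevy ν) {C0 : ℝ}
    (hu_cont : Continuous u) (hC0 : ∀ x, |u x| ≤ C0)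
    (hφm : Measurable φ) (hφInt : Integrable φ (volume : Measure (Eucl n)))
    {v : Eucl n → ℝ} (hv_cont : Continuous v) (hvb : ∀ x, |v x| ≤ C0)
    {ε : ℝ} (hε : 0 < ε) :
    Integrable (fun p : Eucl n × Eucl n =>
      if ε ≤ ‖p.2‖ then (u p.1 - v (p.1 + p.2)) * φ p.1 else 0)
      ((volume : Measure (Eucl n)).prod ν) := by
  have hum : Measurable u := hu_cont.measurable
  have hvm : Measurable v := hv_cont.measurable
  have hcond : MeasurableSet {p : Eucl n × Eucl n | ε ≤ ‖p.2‖} :=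
    measurable_snd (tail_meas ε)
  have hm : Measurable (fun p : Eucl n × Eucl n =>
      if ε ≤ ‖p.2‖ then (u p.1 - v (p.1 + p.2)) * φ p.1 else 0) := by
    refine Measurable.ite hcond ?_ measurable_const
    exact ((hum.comp measurable_fst).sub
      (hvm.comp (measurable_fst.add measurable_snd))).mul (hφm.comp measurable_fst)
  refine ⟨hm.aestronglyMeasurable, ?_⟩
  rw [hasFiniteIntegral_iff_norm]
  have hbound : ∀ p : Eucl n × Eucl n,
      ENNReal.ofReal ‖if ε ≤ ‖p.2‖ then (u p.1 - v (p.1 + p.2)) * φ p.1 else 0‖ ≤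
        ENNReal.ofReal (2 * |C0| * |φ p.1|) *
          Set.indicator {z : Eucl n | ε ≤ ‖z‖} (fun _ => (1:ℝ≥0∞)) p.2 := by
    intro p
    by_cases h : ε ≤ ‖p.2‖
    · rw [if_pos h]
      have hmem : p.2 ∈ {z : Eucl n | ε ≤ ‖z‖} := h
      rw [Set.indicator_of_mem hmem, mul_one]
      refine ENNReal.ofReal_le_ofReal ?_
      rw [norm_mul, Real.norm_eq_abs, Real.norm_eq_abs]
      have h1 := hC0 p.1; have h2 := hvb (p.1 + p.2); have h3 := le_abs_self C0
      have h4 : |u p.1 - v (p.1 + p.2)| ≤ 2 * |C0| := by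
        calc |u p.1 - v (p.1 + p.2)| ≤ |u p.1| + |v (p.1 + p.2)| := abs_sub _ _
        _ ≤ 2 * |C0| := by linarith
      exact mul_le_mul_of_nonneg_right h4 (abs_nonneg _)
    · have hmem : p.2 ∉ {z : Eucl n | ε ≤ ‖z‖} := h
      rw [if_neg h, Set.indicator_of_notMem hmem]
      simp
  refine lt_of_le_of_lt (lintegral_mono hbound) ?_
  have hfmeas : AEMeasurable (fun y : Eucl n => ENNReal.ofReal (2 * |C0| * |φ y|))
      (volume : Measure (Eucl n)) := by
    exact (ENNReal.measurable_ofReal.comp (measurable_const.mul hφm.abs)).aemeasurable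
  have hgmeas : AEMeasurable
      (fun z : Eucl n => Set.indicator {z : Eucl n | ε ≤ ‖z‖} (fun _ => (1:ℝ≥0∞)) z) ν := by
    exact (measurable_const.indicator (tail_meas ε)).aemeasurable
  rw [lintegral_prod_mul hfmeas hgmeas]
  refine ENNReal.mul_lt_top ?_ ?_
  · have : ∀ y : Eucl n, ENNReal.ofReal (2 * |C0| * |φ y|) =
        ENNReal.ofReal (2 * |C0|) * ENNReal.ofReal ‖φ y‖ := by
      intro y
      rw [← ENNReal.ofReal_mul (by positivity), Real.norm_eq_abs]
    simp_rw [this]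
    rw [lintegral_const_mul' _ _ ENNReal.ofReal_ne_top]
    refine ENNReal.mul_lt_top ENNReal.ofReal_lt_top ?_
    have := hφInt.2
    rw [hasFiniteIntegral_iff_norm] at this
    exact this
  · rw [lintegral_indicator (tail_meas ε)]
    simpa using nu_tail hν hε

lemma trunc_prod_identity [SigmaFinite ν] (hν : IsSymmLevy ν) {C0 : ℝ}
    (hu_cont : Continuous u) (hC0 : ∀ x, |u x| ≤ C0)
    (hφm : Measurable φ) (hφInt : Integrable φ (volume : Measure (Eucl n)))
    (hH : Integrable (fun p : Eucl n × Eucl n =>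
      (u p.1 - u (p.1 + p.2)) * (φ p.1 - φ (p.1 + p.2))) ((volume : Measure (Eucl n)).prod ν))
    {ε : ℝ} (hε : 0 < ε) :
    ∫ p : Eucl n × Eucl n,
        (if ε ≤ ‖p.2‖ then (u p.1 - u (p.1 + p.2)) * (φ p.1 - φ (p.1 + p.2)) else 0)
        ∂((volume : Measure (Eucl n)).prod ν)
      = 2 * ∫ y, φ y * truncL ν u y ε ∂(volume : Measure (Eucl n)) := by
  set P := (volume : Measure (Eucl n)).prod ν with hP
  set Hε : Eucl n × Eucl n → ℝ := fun p =>
    if ε ≤ ‖p.2‖ then (u p.1 - u (p.1 + p.2)) * (φ p.1 - φ (p.1 + p.2)) else 0 with hHε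
  set T1 : Eucl n × Eucl n → ℝ := fun p =>
    if ε ≤ ‖p.2‖ then (u p.1 - u (p.1 + p.2)) * φ p.1 else 0 with hT1
  set T2 : Eucl n × Eucl n → ℝ := fun p =>
    if ε ≤ ‖p.2‖ then (u p.1 - u (p.1 + p.2)) * φ (p.1 + p.2) else 0 with hT2
  have hcond : MeasurableSet {p : Eucl n × Eucl n | ε ≤ ‖p.2‖} :=
    measurable_snd (tail_meas ε)
  have hT1int : Integrable T1 P :=
    T1_integrable hν hu_cont hC0 hφm hφInt hu_cont hC0 hε
  have hHεm : AEStronglyMeasurable Hε P := by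
    refine (Measurable.ite hcond ?_ measurable_const).aestronglyMeasurable
    exact ((hu_cont.measurable.comp measurable_fst).sub
        (hu_cont.measurable.comp (measurable_fst.add measurable_snd))).mul
      ((hφm.comp measurable_fst).sub (hφm.comp (measurable_fst.add measurable_snd)))
  have hHεint : Integrable Hε P := by
    refine hH.norm.mono' hHεm (ae_of_all _ fun p => ?_)
    by_cases h : ε ≤ ‖p.2‖
    · simp only [hHε, h, if_true]; exact le_rfl
    · simp only [hHε, h, if_false, norm_zero]
      exact norm_nonneg _
  have hsplit : ∀ p : Eucl n × Eucl n, T2 p = T1 p - Hε p := by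
    intro p
    simp only [hT2, hT1, hHε]
    by_cases h : ε ≤ ‖p.2‖
    · simp only [h, if_true]; ring
    · simp only [h, if_false]; ring
  have hT2int : Integrable T2 P := by
    have := hT1int.sub hHεint
    refine this.congr (ae_of_all _ fun p => (hsplit p).symm)
  -- change of variables for T2
  have hT2eq : ∫ p, T2 p ∂P = - ∫ p, T1 p ∂P := by
    set T1' : Eucl n × Eucl n → ℝ := fun q =>
      if ε ≤ ‖q.2‖ then (u (q.1 - q.2) - u q.1) * φ q.1 else 0 with hT1'
    have e1 : ∀ p : Eucl n × Eucl n, T1' ((fun p : Eucl n × Eucl n => (p.1 + p.2, p.2)) p)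
        = T2 p := by
      intro p
      simp only [hT1', hT2, add_sub_cancel_right]
    have step1 : ∫ p, T2 p ∂P = ∫ q, T1' q ∂P := by
      rw [← integral_congr_ae (ae_of_all _ e1)]
      exact (mpTau (ν := ν)).integral_comp (tauEquiv n).measurableEmbedding T1'
    have e2 : ∀ p : Eucl n × Eucl n, T1' ((fun p : Eucl n × Eucl n => (p.1, -p.2)) p)
        = - T1 p := by
      intro p
      simp only [hT1', hT1, norm_neg, sub_neg_eq_add]
      by_cases h : ε ≤ ‖p.2‖
      · simp only [h, if_true]; ring
      · simp only [h, if_false]; ring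
    have step2 : ∫ q, T1' q ∂P = - ∫ p, T1 p ∂P := by
      have := (mpNegSnd (ν := ν) hν).integral_comp (negSndEquiv n).measurableEmbedding T1'
      rw [← this, integral_congr_ae (ae_of_all _ e2), integral_neg]
    rw [step1, step2]
  have hsub : ∫ p, T2 p ∂P = ∫ p, T1 p ∂P - ∫ p, Hε p ∂P := by
    rw [integral_congr_ae (ae_of_all _ hsplit)]
    exact integral_sub hT1int hHεint
  have hkey : ∫ p, Hε p ∂P = 2 * ∫ p, T1 p ∂P := by
    rw [hT2eq] at hsub; linarith
  rw [hkey]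
  congr 1
  -- compute ∫ T1 as iterated integral
  rw [integral_prod _ hT1int]
  refine integral_congr_ae (ae_of_all _ fun y => ?_)
  have e3 : ∀ z : Eucl n, T1 (y, z) = φ y * (if ε ≤ ‖z‖ then (u y - u (y + z)) else 0) := by
    intro z
    simp only [hT1]
    by_cases h : ε ≤ ‖z‖
    · simp only [h, if_true]; ring
    · simp only [h, if_false]; ring
  calc ∫ z, T1 (y, z) ∂ν = ∫ z, φ y * (if ε ≤ ‖z‖ then (u y - u (y + z)) else 0) ∂ν :=
        integral_congr_ae (ae_of_all _ e3)
    _ = φ y * ∫ z, (if ε ≤ ‖z‖ then (u y - u (y + z)) else 0) ∂ν := integral_const_mul _ _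
    _ = φ y * truncL ν u y ε := by
        congr 1
        rw [truncL, ← integral_indicator (tail_meas ε)]
        refine integral_congr_ae (ae_of_all _ fun z => ?_)
        rw [Set.indicator_apply]
        rfl
end Part4
end AuxAll

theorem dirichlet_stmt11 {n : ℕ} (ν : Measure (Eucl n)) (hν : IsSymmLevy ν)
    (Ω : Set (Eucl n)) (hΩo : IsOpen Ω) (hΩne : Ω.Nonempty)
    (hΩb : Bornology.IsBounded Ω)
    (u : Eucl n → ℝ) (hu : ContDiff ℝ 2 u)
    (hub : ∀ i : ℕ, i ≤ 2 → ∃ C : ℝ, ∀ x, ‖iteratedFDeriv ℝ i u x‖ ≤ C)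
    (f : Eucl n → ℝ) (hfL : ∀ x ∈ Ω, HasLAt ν u x (f x)) :
    MemLp f 2 ((volume : Measure (Eucl n)).restrict Ω) ∧
      ∀ φ : Eucl n → ℝ, MemH ν Ω φ → formB ν u φ = ∫ x in Ω, f x * φ x := by
  classical
  obtain ⟨C0, hC0'⟩ := hub 0 (by norm_num)
  obtain ⟨C1, hC1'⟩ := hub 1 (by norm_num)
  obtain ⟨C2, hC2'⟩ := hub 2 le_rfl
  have hC0 : ∀ x, |u x| ≤ C0 := fun x => by
    have := hC0' x
    rwa [norm_iteratedFDeriv_zero, Real.norm_eq_abs] at this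
  have hC1fd : ∀ x, ‖fderiv ℝ u x‖ ≤ C1 := fderiv_bound_of_iterated hC1'
  have hC2nn : 0 ≤ C2 := le_trans (norm_nonneg _) (hC2' 0)
  have hDulip := fderiv_lip hu hC2'
  have hsec : ∀ x z : Eucl n, |2 * u x - u (x + z) - u (x - z)| ≤ 2 * C2 * ‖z‖ ^ 2 :=
    second_diff_bound hu hC2nn hDulip
  have hcont : Continuous u := hu.continuous
  have hlip : ∀ x y : Eucl n, ‖u x - u y‖ ≤ C1 * ‖x - y‖ :=
    lip_of_fderiv_bound (hu.differentiable (by norm_num)) hC1fd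
  set M := (∫⁻ z, ENNReal.ofReal (min (2 * C2 * ‖z‖ ^ 2) (4 * |C0|)) ∂ν).toReal with hM
  have htr : ∀ (x : Eucl n) {ε : ℝ}, 0 < ε → |truncL ν u x ε| ≤ M := fun x ε hε =>
    truncL_bound hν hcont hC0 hC2nn hsec x hε
  set εs : ℕ → ℝ := fun k => 1 / ((k : ℝ) + 1) with hεs
  have hεpos : ∀ k, 0 < εs k := fun k => by positivity
  have hεtend : Tendsto εs atTop (𝓝[>] (0:ℝ)) :=
    tendsto_nhdsWithin_of_tendsto_nhds_of_eventually_within _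
      tendsto_one_div_add_atTop_nhds_zero_nat
      (Eventually.of_forall fun k => hεpos k)
  have hf_lim : ∀ x ∈ Ω, Tendsto (fun k => truncL ν u x (εs k)) atTop (𝓝 (f x)) :=
    fun x hx => ((hfL x hx).2).comp hεtend
  have hΩm : MeasurableSet Ω := hΩo.measurableSet
  haveI hfinΩ : IsFiniteMeasure ((volume : Measure (Eucl n)).restrict Ω) :=
    ⟨by rw [Measure.restrict_apply_univ]; exact hΩb.measure_lt_top⟩
  have hfASM : AEStronglyMeasurable f ((volume : Measure (Eucl n)).restrict Ω) := by
    refine aestronglyMeasurable_of_tendsto_ae atTop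
      (fun k => (truncL_measurable hν hcont (hεpos k)).aestronglyMeasurable) ?_
    exact (ae_restrict_iff' hΩm).2 (ae_of_all _ fun x hx => hf_lim x hx)
  have hfbdd : ∀ᵐ x ∂((volume : Measure (Eucl n)).restrict Ω), ‖f x‖ ≤ M := by
    refine (ae_restrict_iff' hΩm).2 (ae_of_all _ fun x hx => ?_)
    rw [Real.norm_eq_abs]
    have habs : Tendsto (fun k => |truncL ν u x (εs k)|) atTop (𝓝 |f x|) :=
      (continuous_abs.tendsto _).comp (hf_lim x hx)
    exact le_of_tendsto habs (Eventually.of_forall fun k => htr x (hεpos k))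
  refine ⟨MemLp.of_bound hfASM M hfbdd, ?_⟩
  intro φ hφ
  obtain ⟨⟨hφm, hφsob⟩, hφ0⟩ := hφ
  haveI : SigmaFinite ν := nu_sigmaFinite hν
  rw [sobSq] at hφsob
  have hφsq : ∫⁻ x in Ω, ENNReal.ofReal (φ x ^ 2) < ⊤ :=
    lt_of_le_of_lt le_self_add hφsob
  have hEφ : ∫⁻ y in Ω, ∫⁻ z, ENNReal.ofReal ((φ y - φ (y + z)) ^ 2) ∂ν < ⊤ := by
    have h2 : (1/2 : ℝ≥0∞) * ∫⁻ y in Ω, ∫⁻ z, ENNReal.ofReal ((φ y - φ (y + z)) ^ 2) ∂ν < ⊤ :=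
      lt_of_le_of_lt le_add_self hφsob
    by_contra h
    push_neg at h
    rw [top_le_iff.1 h, ENNReal.mul_top (by norm_num)] at h2
    exact absurd h2 (lt_irrefl _)
  have hφInt : Integrable φ (volume : Measure (Eucl n)) := by
    refine ⟨hφm.aestronglyMeasurable, ?_⟩
    rw [hasFiniteIntegral_iff_norm]
    have hae : (fun x => ENNReal.ofReal ‖φ x‖) =ᵐ[(volume : Measure (Eucl n))]
        (fun x => Ω.indicator (fun x => ENNReal.ofReal ‖φ x‖) x) := by
      filter_upwards [hφ0] with x hx
      by_cases h : x ∈ Ω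
      · rw [Set.indicator_of_mem h]
      · rw [Set.indicator_of_notMem h, hx h]; simp
    rw [lintegral_congr_ae hae, lintegral_indicator hΩm]
    have hb : ∀ x : Eucl n, ENNReal.ofReal ‖φ x‖ ≤ ENNReal.ofReal (φ x ^ 2) + 1 := by
      intro x
      have h1 : ‖φ x‖ ≤ φ x ^ 2 + 1 := by
        rw [Real.norm_eq_abs]
        nlinarith [sq_nonneg (|φ x| - 1), sq_abs (φ x), abs_nonneg (φ x)]
      calc ENNReal.ofReal ‖φ x‖ ≤ ENNReal.ofReal (φ x ^ 2 + 1) := ENNReal.ofReal_le_ofReal h1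
      _ = ENNReal.ofReal (φ x ^ 2) + 1 := by
          rw [ENNReal.ofReal_add (sq_nonneg _) zero_le_one, ENNReal.ofReal_one]
    calc ∫⁻ x in Ω, ENNReal.ofReal ‖φ x‖
        ≤ ∫⁻ x in Ω, (ENNReal.ofReal (φ x ^ 2) + 1) := lintegral_mono hb
      _ = (∫⁻ x in Ω, ENNReal.ofReal (φ x ^ 2)) + volume Ω := by
          rw [lintegral_add_right _ measurable_const, setLIntegral_one]
      _ < ⊤ := ENNReal.add_lt_top.2 ⟨hφsq, hΩb.measure_lt_top⟩
  have hUB : ∀ y z : Eucl n, (u y - u (y + z)) ^ 2 ≤ min (C1 ^ 2 * ‖z‖ ^ 2) ((2 * |C0|) ^ 2) := by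
    intro y z
    have h1 : |u y - u (y + z)| ≤ C1 * ‖z‖ := by
      have := hlip y (y + z)
      have e : y - (y + z) = -z := by abel
      rwa [e, norm_neg, Real.norm_eq_abs] at this
    have h2 : |u y - u (y + z)| ≤ 2 * |C0| := abs_two_bound hC0
    have hn : 0 ≤ |u y - u (y + z)| := abs_nonneg _
    refine le_min ?_ ?_
    · calc (u y - u (y + z)) ^ 2 = |u y - u (y + z)| ^ 2 := (sq_abs _).symm
      _ ≤ (C1 * ‖z‖) ^ 2 := pow_le_pow_left₀ hn h1 2
      _ = C1 ^ 2 * ‖z‖ ^ 2 := by ring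
    · calc (u y - u (y + z)) ^ 2 = |u y - u (y + z)| ^ 2 := (sq_abs _).symm
      _ ≤ (2 * |C0|) ^ 2 := pow_le_pow_left₀ hn h2 2
  have hCfin : ∫⁻ z, ENNReal.ofReal (min (C1 ^ 2 * ‖z‖ ^ 2) ((2 * |C0|) ^ 2)) ∂ν < ⊤ :=
    levy_min_finite hν (by positivity) (by positivity)
  have hH : Integrable (fun p : Eucl n × Eucl n =>
      (u p.1 - u (p.1 + p.2)) * (φ p.1 - φ (p.1 + p.2)))
      ((volume : Measure (Eucl n)).prod ν) :=
    H_integrable hν hcont hUB hCfin hφm hφ0 hΩm hΩb.measure_lt_top hEφ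
  have hL1 : Tendsto (fun k => ∫ p : Eucl n × Eucl n,
      (if εs k ≤ ‖p.2‖ then (u p.1 - u (p.1 + p.2)) * (φ p.1 - φ (p.1 + p.2)) else 0)
        ∂((volume : Measure (Eucl n)).prod ν)) atTop
      (𝓝 (∫ p : Eucl n × Eucl n, (u p.1 - u (p.1 + p.2)) * (φ p.1 - φ (p.1 + p.2))
        ∂((volume : Measure (Eucl n)).prod ν))) := by
    refine tendsto_integral_of_dominated_convergence
      (fun p => ‖(u p.1 - u (p.1 + p.2)) * (φ p.1 - φ (p.1 + p.2))‖) ?_ hH.norm ?_ ?_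
    · intro k
      refine (Measurable.ite (measurable_snd (tail_meas (εs k))) ?_
        measurable_const).aestronglyMeasurable
      exact ((hcont.measurable.comp measurable_fst).sub
          (hcont.measurable.comp (measurable_fst.add measurable_snd))).mul
        ((hφm.comp measurable_fst).sub (hφm.comp (measurable_fst.add measurable_snd)))
    · intro k
      refine ae_of_all _ fun p => ?_
      by_cases h : εs k ≤ ‖p.2‖
      · simp only [h, if_true]; exact le_rfl
      · simp only [h, if_false, norm_zero]; exact norm_nonneg _
    · have hnull : ((volume : Measure (Eucl n)).prod ν) {p : Eucl n × Eucl n | p.2 = 0} = 0 := by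
        have he : {p : Eucl n × Eucl n | p.2 = 0}
            = (univ : Set (Eucl n)) ×ˢ ({0} : Set (Eucl n)) := by
          ext p
          simp only [Set.mem_setOf_eq, Set.mem_prod, Set.mem_univ, Set.mem_singleton_iff,
            true_and]
        rw [he, Measure.prod_prod, hν.1, mul_zero]
      have hae2 : ∀ᵐ p ∂((volume : Measure (Eucl n)).prod ν), p.2 ≠ 0 := by
        rw [ae_iff]; simpa using hnull
      filter_upwards [hae2] with p hp
      have hpos : 0 < ‖p.2‖ := norm_pos_iff.2 hp
      have hev : ∀ᶠ k in atTop,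
          (if εs k ≤ ‖p.2‖ then (u p.1 - u (p.1 + p.2)) * (φ p.1 - φ (p.1 + p.2)) else 0)
            = (u p.1 - u (p.1 + p.2)) * (φ p.1 - φ (p.1 + p.2)) := by
        filter_upwards [tendsto_one_div_add_atTop_nhds_zero_nat.eventually_lt_const hpos]
          with k hk
        rw [if_pos (le_of_lt hk)]
      exact Tendsto.congr' (hev.mono fun k hk => hk.symm) tendsto_const_nhds
  have hL2 : ∀ k, ∫ p : Eucl n × Eucl n,
      (if εs k ≤ ‖p.2‖ then (u p.1 - u (p.1 + p.2)) * (φ p.1 - φ (p.1 + p.2)) else 0)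
        ∂((volume : Measure (Eucl n)).prod ν)
      = 2 * ∫ y, φ y * truncL ν u y (εs k) ∂(volume : Measure (Eucl n)) :=
    fun k => trunc_prod_identity hν hcont hC0 hφm hφInt hH (hεpos k)
  have hL3 : Tendsto (fun k => ∫ y, φ y * truncL ν u y (εs k) ∂(volume : Measure (Eucl n)))
      atTop (𝓝 (∫ y, φ y * f y ∂(volume : Measure (Eucl n)))) := by
    refine tendsto_integral_of_dominated_convergence (fun y => ‖φ y‖ * M) ?_
      (hφInt.norm.mul_const M) ?_ ?_
    · intro k
      exact (hφm.mul (truncL_measurable hν hcont (hεpos k)).measurable).aestronglyMeasurable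
    · intro k
      refine ae_of_all _ fun y => ?_
      simp only [norm_mul, Real.norm_eq_abs]
      exact mul_le_mul_of_nonneg_left (htr y (hεpos k)) (abs_nonneg _)
    · filter_upwards [hφ0] with y hy
      by_cases hyΩ : y ∈ Ω
      · exact (hf_lim y hyΩ).const_mul (φ y)
      · have h0 : φ y = 0 := hy hyΩ
        simp only [h0, zero_mul]
        exact tendsto_const_nhds
  have hHint : (∫ p : Eucl n × Eucl n, (u p.1 - u (p.1 + p.2)) * (φ p.1 - φ (p.1 + p.2))
      ∂((volume : Measure (Eucl n)).prod ν))
      = 2 * ∫ y, φ y * f y ∂(volume : Measure (Eucl n)) :=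
    tendsto_nhds_unique hL1 (((hL3.const_mul 2)).congr fun k => (hL2 k).symm)
  have hform : formB ν u φ = (1/2 : ℝ) * ∫ p : Eucl n × Eucl n,
      (u p.1 - u (p.1 + p.2)) * (φ p.1 - φ (p.1 + p.2))
      ∂((volume : Measure (Eucl n)).prod ν) := by
    rw [formB]
    congr 1
    exact (integral_prod _ hH).symm
  rw [hform, hHint]
  have he2 : (1/2 : ℝ) * (2 * ∫ y, φ y * f y ∂(volume : Measure (Eucl n)))
      = ∫ y, φ y * f y ∂(volume : Measure (Eucl n)) := by ring
  rw [he2]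
  have hswap : (fun y => φ y * f y) =ᵐ[(volume : Measure (Eucl n))]
      (fun y => Ω.indicator (fun x => f x * φ x) y) := by
    filter_upwards [hφ0] with y hy
    by_cases h : y ∈ Ω
    · rw [Set.indicator_of_mem h]; ring
    · rw [Set.indicator_of_notMem h, hy h, zero_mul]
  rw [integral_congr_ae hswap, integral_indicator hΩm]
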